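/- Let q be a prime power, ℓ a positive divisor of q−1, s = (q−1)/ℓ, and f(x) = x^r h(x^s) ∈ F_q[x]. Then f permutes F_q if and only if gcd(r, s) = 1 and g(x) = x^r h(x)^s permutes the set μ_ℓ of ℓ-th roots of unity in F_q. -/

import Mathlib

open Polynomial

/-- In a finite cyclic group of order `s * ℓ`, every `ℓ`-th root of unity is an
`s`-th power. -/
lemma exists_pow_root_aux {G : Type*} [Group G] [Finite G] [IsCyclic G]
    (s ℓ : ℕ) (hcard : s * ℓ = Nat.card G) (x : G) (hx : x ^ ℓ = 1) :
    ∃ y : G, y ^ s = x := by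
  obtain ⟨γ, hγ⟩ := IsCyclic.exists_generator (α := G)
  have hord : orderOf γ = Nat.card G := orderOf_eq_card_of_forall_mem_zpowers hγ
  obtain ⟨k, hk⟩ := Subgroup.mem_zpowers_iff.mp (hγ x)
  have hℓ0 : 0 < ℓ := by
    rcases Nat.eq_zero_or_pos ℓ with h0 | h0
    · exfalso; rw [h0, mul_zero] at hcard; have := Nat.card_pos (α := G); omega
    · exact h0
  have h1 : γ ^ (k * (ℓ : ℤ)) = 1 := by
    rw [zpow_mul, hk, zpow_natCast, hx]
  have h2 : ((Nat.card G : ℕ) : ℤ) ∣ k * (ℓ : ℤ) := by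
    rw [← hord]
    exact orderOf_dvd_iff_zpow_eq_one.mpr h1
  rw [← hcard] at h2
  push_cast at h2
  have h3 : (s : ℤ) ∣ k := by
    have hℓz : (ℓ : ℤ) ≠ 0 := by exact_mod_cast hℓ0.ne'
    exact (mul_dvd_mul_iff_right hℓz).mp h2
  obtain ⟨m, hm⟩ := h3
  refine ⟨γ ^ m, ?_⟩
  rw [← zpow_natCast (γ ^ m), ← zpow_mul, ← hk, hm]
  ring_nf

/-- Lemma 3.1: `f(x) = x^r h(x^s)` permutes `F_q` iff `gcd(r,s) = 1` and
`g(x) = x^r h(x)^s` permutes the group `μ_ℓ` of `ℓ`-th roots of unity, where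
`s = (q-1)/ℓ`. -/
theorem xr_hxs_permutes_iff (K : Type) [Field K] [Fintype K]
    (ℓ r : ℕ) (hℓ : 0 < ℓ) (hr : 0 < r) (hdvd : ℓ ∣ Fintype.card K - 1)
    (s : ℕ) (hs : s = (Fintype.card K - 1) / ℓ)
    (h : Polynomial K)
    (f g : K → K)
    (hf : ∀ x : K, f x = x ^ r * h.eval (x ^ s))
    (hg : ∀ x : K, g x = x ^ r * (h.eval x) ^ s) :
    Function.Bijective f ↔
      (Nat.gcd r s = 1 ∧ Set.BijOn g {x : K | x ^ ℓ = 1} {x : K | x ^ ℓ = 1}) := by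
  have hq1 : 0 < Fintype.card K - 1 := by
    have := Fintype.one_lt_card (α := K); omega
  have hsl : s * ℓ = Fintype.card K - 1 := by
    rw [hs]; exact Nat.div_mul_cancel hdvd
  have hs0 : 0 < s := by
    rcases Nat.eq_zero_or_pos s with h0 | h0
    · rw [h0, zero_mul] at hsl; omega
    · exact h0
  have hcardu : Nat.card Kˣ = Fintype.card K - 1 := by
    rw [Nat.card_units, Nat.card_eq_fintype_card]
  have key : ∀ y : K, g (y ^ s) = (f y) ^ s := by
    intro y; rw [hg, hf]; ring
  have hmem : ∀ x : K, x ≠ 0 → x ^ s ∈ {x : K | x ^ ℓ = 1} := by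
    intro x hx
    simp only [Set.mem_setOf_eq, ← pow_mul, hsl]
    exact FiniteField.pow_card_sub_one_eq_one x hx
  have hf0 : f 0 = 0 := by rw [hf, zero_pow hr.ne', zero_mul]
  have hroot : ∀ u : K, u ∈ {x : K | x ^ ℓ = 1} → ∃ y : K, y ≠ 0 ∧ y ^ s = u := by
    intro u hu
    have hu0 : u ≠ 0 := by
      intro h0; rw [Set.mem_setOf_eq, h0, zero_pow hℓ.ne'] at hu
      exact zero_ne_one hu
    have hu1 : (Units.mk0 u hu0) ^ ℓ = 1 := by
      ext; rw [Units.val_pow_eq_pow_val]; simpa using hu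
    obtain ⟨y, hy⟩ := exists_pow_root_aux s ℓ (by rw [hcardu]; exact hsl)
      (Units.mk0 u hu0) hu1
    refine ⟨(y : K), Units.ne_zero y, ?_⟩
    rw [← Units.val_pow_eq_pow_val, hy, Units.val_mk0]
  constructor
  · intro hbij
    have hinj := hbij.1
    have hfne : ∀ x : K, x ≠ 0 → f x ≠ 0 := by
      intro x hx h0
      exact hx (hinj (h0.trans hf0.symm))
    have hgcd : Nat.gcd r s = 1 := by
      by_contra hd
      have hd1 : 1 < Nat.gcd r s := by
        have : 0 < Nat.gcd r s := Nat.gcd_pos_of_pos_left _ hr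
        omega
      set d := Nat.gcd r s with hdd
      have hds : d ∣ s := Nat.gcd_dvd_right r s
      have hdr : d ∣ r := Nat.gcd_dvd_left r s
      obtain ⟨γ, hγ⟩ := IsCyclic.exists_generator (α := Kˣ)
      have hord : orderOf γ = Fintype.card K - 1 := by
        rw [orderOf_eq_card_of_forall_mem_zpowers hγ, hcardu]
      have hdq : d ∣ Fintype.card K - 1 := hds.trans ⟨ℓ, hsl.symm⟩
      set m := (Fintype.card K - 1) / d with hm
      have hmd : m * d = Fintype.card K - 1 := Nat.div_mul_cancel hdq
      set ζ := γ ^ m with hζ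
      have hζd : ζ ^ d = 1 := by
        rw [hζ, ← pow_mul, hmd, ← hord, pow_orderOf_eq_one]
      have hζ1 : ζ ≠ 1 := by
        intro h1
        have h2 : orderOf γ ∣ m := orderOf_dvd_of_pow_eq_one h1
        rw [hord] at h2
        have hm0 : 0 < m := Nat.div_pos (Nat.le_of_dvd hq1 hdq) (by omega)
        have hmlt : m < Fintype.card K - 1 := Nat.div_lt_self hq1 hd1
        have := Nat.le_of_dvd hm0 h2
        omega
      have hζr : ζ ^ r = 1 := by
        obtain ⟨c, hc⟩ := hdr; rw [hc, pow_mul, hζd, one_pow]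
      have hζs : ζ ^ s = 1 := by
        obtain ⟨c, hc⟩ := hds; rw [hc, pow_mul, hζd, one_pow]
      have heq : f ((ζ : Kˣ) : K) = f 1 := by
        rw [hf, hf]
        have h1 : ((ζ : K)) ^ r = 1 := by
          rw [← Units.val_pow_eq_pow_val, hζr, Units.val_one]
        have h2 : ((ζ : K)) ^ s = 1 := by
          rw [← Units.val_pow_eq_pow_val, hζs, Units.val_one]
        rw [h1, h2, one_pow, one_pow]
      have := hinj heq
      exact hζ1 (Units.ext (by simpa using this))
    have hmaps : Set.MapsTo g {x : K | x ^ ℓ = 1} {x : K | x ^ ℓ = 1} := by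
      intro u hu
      obtain ⟨y, hy0, hys⟩ := hroot u hu
      have : g u = (f y) ^ s := by rw [← hys, key]
      rw [Set.mem_setOf_eq, this, ← pow_mul, hsl]
      exact FiniteField.pow_card_sub_one_eq_one _ (hfne y hy0)
    have hsurj : Set.SurjOn g {x : K | x ^ ℓ = 1} {x : K | x ^ ℓ = 1} := by
      intro z hz
      obtain ⟨w, hw0, hws⟩ := hroot z hz
      obtain ⟨y, hy⟩ := hbij.2 w
      have hy0 : y ≠ 0 := by
        intro h0; rw [h0, hf0] at hy; exact hw0 hy.symm
      refine ⟨y ^ s, hmem y hy0, ?_⟩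
      rw [key, hy, hws]
    exact ⟨hgcd, (Set.Finite.surjOn_iff_bijOn_of_mapsTo (Set.toFinite _) hmaps).mp hsurj⟩
  · rintro ⟨hgcd, hbij⟩
    have hh : ∀ u : K, u ∈ {x : K | x ^ ℓ = 1} → h.eval u ≠ 0 := by
      intro u hu h0
      have hmem2 := hbij.1 hu
      rw [Set.mem_setOf_eq, hg, h0, zero_pow hs0.ne', mul_zero,
        zero_pow hℓ.ne'] at hmem2
      exact zero_ne_one hmem2
    have hfne : ∀ x : K, x ≠ 0 → f x ≠ 0 := by
      intro x hx
      rw [hf]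
      exact mul_ne_zero (pow_ne_zero _ hx) (hh _ (hmem x hx))
    have hinj : Function.Injective f := by
      intro x y hxy
      rcases eq_or_ne x 0 with rfl | hx
      · rcases eq_or_ne y 0 with rfl | hy
        · rfl
        · exact absurd (hxy.symm.trans hf0) (hfne y hy)
      rcases eq_or_ne y 0 with rfl | hy
      · exact absurd (hxy.trans hf0) (hfne x hx)
      have hss : x ^ s = y ^ s := by
        refine hbij.2.1 (hmem x hx) (hmem y hy) ?_
        rw [key, key, hxy]
      have hrr : x ^ r = y ^ r := by
        have h1 : x ^ r * h.eval (x ^ s) = y ^ r * h.eval (y ^ s) := by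
          rw [← hf, ← hf, hxy]
        rw [hss] at h1
        exact mul_right_cancel₀ (hh _ (hmem y hy)) h1
      set u := Units.mk0 x hx with hu
      set v := Units.mk0 y hy with hv
      have hur : u ^ r = v ^ r := Units.ext (by simpa [hu, hv] using hrr)
      have hus : u ^ s = v ^ s := Units.ext (by simpa [hu, hv] using hss)
      set t := u * v⁻¹ with ht
      have htr : t ^ r = 1 := by
        rw [ht, mul_pow, inv_pow, hur, mul_inv_cancel]
      have hts : t ^ s = 1 := by
        rw [ht, mul_pow, inv_pow, hus, mul_inv_cancel]
      have hdvd1 : orderOf t ∣ 1 := by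
        rw [← hgcd]
        exact Nat.dvd_gcd (orderOf_dvd_of_pow_eq_one htr)
          (orderOf_dvd_of_pow_eq_one hts)
      have ht1 : t = 1 := orderOf_eq_one_iff.mp (Nat.dvd_one.mp hdvd1)
      have huv : u = v := by
        rwa [ht, mul_inv_eq_one] at ht1
      have := congrArg Units.val huv
      simpa [hu, hv] using this
    exact Finite.injective_iff_bijective.mp hinj
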